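/- For every weakly superadditive game v, C(v) = {x_{v-v̂}} + ⋂_{∅≠B⊆N} C(v̂^B), where v̂ is the zero-normalization of v, v̂^B = v̂(B)·u_B + (v̂(N)-v̂(B))·u_N, and x_{v-v̂} = (v({i}))_{i∈N}. -/

import Mathlib

open Finset

def coreGame {N : Type*} [Fintype N] [DecidableEq N] (v : Finset N → ℝ) : Set (N → ℝ) :=
  {x | ∑ i, x i = v univ ∧ ∀ A : Finset N, v A ≤ ∑ i ∈ A, x i}

def unanimity {N : Type*} [DecidableEq N] (A B : Finset N) : ℝ := if A ⊆ B then 1 else 0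

def gameB {N : Type*} [Fintype N] [DecidableEq N] (v : Finset N → ℝ) (B A : Finset N) : ℝ :=
  v B * unanimity B A + (v univ - v B) * unanimity univ A

def zeroNormalization {N : Type*} [DecidableEq N] (v : Finset N → ℝ) (A : Finset N) : ℝ :=
  v A - ∑ i ∈ A, v {i}

theorem stmt12 {N : Type*} [Fintype N] [DecidableEq N]
    (v : Finset N → ℝ) (hv : v ∅ = 0)
    (hws : ∀ (A : Finset N) (i : N), i ∉ A → v A + v {i} ≤ v (insert i A)) :
    coreGame v
      = (fun x => (fun i => v {i}) + x) ''
          (⋂ B ∈ {B : Finset N | B.Nonempty}, coreGame (gameB (zeroNormalization v) B)) := by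
  classical
  set w := zeroNormalization v with hwdef
  have step : ∀ (T : Finset N) (a : N), a ∉ T → w T ≤ w (insert a T) := by
    intro T a ha
    have h := hws T a ha
    simp only [hwdef, zeroNormalization, Finset.sum_insert ha]
    linarith
  have hmono : ∀ A B : Finset N, A ⊆ B → w A ≤ w B := by
    have key : ∀ n (B : Finset N), B.card = n → ∀ A, A ⊆ B → w A ≤ w B := by
      intro n
      induction n with
      | zero =>
        intro B hB A hAB
        have hBe : B = ∅ := Finset.card_eq_zero.mp hB
        have hAe : A = ∅ := Finset.subset_empty.mp (hBe ▸ hAB)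
        rw [hAe, hBe]
      | succ n ih =>
        intro B hB A hAB
        by_cases hEq : A = B
        · exact le_of_eq (by rw [hEq])
        · obtain ⟨a, haB, haA⟩ : ∃ a ∈ B, a ∉ A := by
            by_contra h; push_neg at h; exact hEq (Finset.Subset.antisymm hAB h)
          have hsub : A ⊆ B.erase a := fun x hx =>
            Finset.mem_erase.2 ⟨fun he => haA (he ▸ hx), hAB hx⟩
          have h1 := ih (B.erase a)
            (by rw [Finset.card_erase_of_mem haB, hB]; rfl) A hsub
          have h2 : w (B.erase a) ≤ w B := by
            have := step (B.erase a) a (Finset.notMem_erase a B)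
            rwa [Finset.insert_erase haB] at this
          linarith
    intro A B hAB
    exact key B.card B rfl A hAB
  have hzero : w ∅ = 0 := by simp [hwdef, zeroNormalization, hv]
  have hnn : ∀ A, 0 ≤ w A := fun A => hzero ▸ hmono ∅ A (Finset.empty_subset A)
  have hbound : ∀ B A : Finset N, gameB w B A ≤ w A := by
    intro B A
    unfold gameB unanimity
    split_ifs with h1 h2 h2
    · have hA : A = univ := Finset.univ_subset_iff.mp h2
      subst hA; simp
    · have := hmono B A h1; linarith
    · exact absurd ((Finset.subset_univ B).trans h2) h1
    · have := hnn A; linarith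
  have hdiag : ∀ A : Finset N, gameB w A A = w A := by
    intro A
    unfold gameB unanimity
    split_ifs with h1 h2
    · have hA : A = univ := Finset.univ_subset_iff.mp h2
      rw [hA]; ring
    · ring
    · exact absurd (Finset.Subset.refl A) h1
    · exact absurd (Finset.Subset.refl A) h1
  have hwuniv : ∀ B : Finset N, gameB w B univ = w univ := by
    intro B
    unfold gameB unanimity
    rw [if_pos (Finset.subset_univ B), if_pos (Finset.Subset.refl _)]
    ring
  ext x
  simp only [Set.mem_image, Set.mem_iInter, Set.mem_setOf_eq, coreGame]
  constructor
  · rintro ⟨hsum, hA⟩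
    refine ⟨fun i => x i - v {i}, ?_, ?_⟩
    · intro B _
      constructor
      · rw [hwuniv B, Finset.sum_sub_distrib, hsum]
        simp [hwdef, zeroNormalization]
      · intro A
        have h1 : w A ≤ ∑ i ∈ A, (x i - v {i}) := by
          rw [Finset.sum_sub_distrib]
          have := hA A
          simp only [hwdef, zeroNormalization]
          linarith
        exact le_trans (hbound B A) h1
    · funext i; simp
  · rintro ⟨y, hy, hxy⟩
    subst hxy
    by_cases hN : (univ : Finset N).Nonempty
    · obtain ⟨hsum, hA⟩ := hy univ hN
      rw [hwuniv univ] at hsum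
      constructor
      · have : ∑ i, ((fun i => v {i}) + y) i = ∑ i, v {i} + ∑ i, y i := by
          simp [Finset.sum_add_distrib]
        rw [this, hsum]
        simp [hwdef, zeroNormalization]
      · intro A
        by_cases hAne : A.Nonempty
        · obtain ⟨_, hA2⟩ := hy A hAne
          have := hA2 A
          rw [hdiag A] at this
          have hsplit : ∑ i ∈ A, ((fun i => v {i}) + y) i
              = ∑ i ∈ A, v {i} + ∑ i ∈ A, y i := by
            simp [Finset.sum_add_distrib]
          rw [hsplit]
          simp only [hwdef, zeroNormalization] at this
          linarith
        · have hAe : A = ∅ := Finset.not_nonempty_iff_eq_empty.mp hAne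
          subst hAe
          simp [hv]
    · have huniv : (univ : Finset N) = ∅ := Finset.not_nonempty_iff_eq_empty.mp hN
      constructor
      · rw [huniv, hv]; simp [huniv]
      · intro A
        have hAe : A = ∅ := Finset.subset_empty.mp (huniv ▸ Finset.subset_univ A)
        subst hAe
        simp [hv]
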